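/- Let N be a friend of 10 and let k ≥ 0 be an integer such that the Fermat number F_k = 2^(2^k) + 1 is prime and F_k divides N. Then there exists a prime p dividing N with p ≡ 1 (mod 2·F_k). -/
import Mathlib

open Finset ArithmeticFunction

-- A friend of 10 is odd.
lemma friend10_odd (N : ℕ) (hN : 10 < N)
    (hfriend : 5 * (ArithmeticFunction.sigma 1) N = 9 * N) : ¬ 2 ∣ N := by
  intro h2
  have hN0 : N ≠ 0 := by omega
  have h5 : (5:ℕ) ∣ N := by
    have h : (5:ℕ) ∣ 9 * N := ⟨ArithmeticFunction.sigma 1 N, hfriend.symm⟩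
    exact (Nat.Coprime.dvd_of_dvd_mul_left (by norm_num) h)
  have h10 : (10:ℕ) ∣ N := Nat.Coprime.mul_dvd_of_dvd_of_dvd (by norm_num) h2 h5
  obtain ⟨t, rfl⟩ := h10
  have ht : 2 ≤ t := by omega
  have hN0' : 10 * t ≠ 0 := hN0
  have hsub : ({1, t, 2*t, 5*t, 10*t} : Finset ℕ) ⊆ (10*t).divisors := by
    intro d hd
    simp only [Finset.mem_insert, Finset.mem_singleton] at hd
    rcases hd with rfl | rfl | rfl | rfl | rfl
    · exact Nat.mem_divisors.mpr ⟨one_dvd _, hN0'⟩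
    · exact Nat.mem_divisors.mpr ⟨⟨10, by ring⟩, hN0'⟩
    · exact Nat.mem_divisors.mpr ⟨⟨5, by ring⟩, hN0'⟩
    · exact Nat.mem_divisors.mpr ⟨⟨2, by ring⟩, hN0'⟩
    · exact Nat.mem_divisors.mpr ⟨dvd_rfl, hN0'⟩
  have hsum : ∑ d ∈ ({1, t, 2*t, 5*t, 10*t} : Finset ℕ), d = 18 * t + 1 := by
    rw [Finset.sum_insert (by simp; omega), Finset.sum_insert (by simp; omega),
      Finset.sum_insert (by simp; omega), Finset.sum_insert (by simp; omega),
      Finset.sum_singleton]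
    ring
  have hle : 18 * t + 1 ≤ ArithmeticFunction.sigma 1 (10 * t) := by
    rw [ArithmeticFunction.sigma_one_apply, ← hsum]
    exact Finset.sum_le_sum_of_subset hsub
  omega

lemma sigma_prime_pow_mod_two (q e : ℕ) (hq : q.Prime) (hqodd : ¬ 2 ∣ q) :
    (ArithmeticFunction.sigma 1 (q ^ e)) % 2 = (e + 1) % 2 := by
  rw [ArithmeticFunction.sigma_one_apply_prime_pow hq, Finset.sum_nat_mod]
  have h1 : ∀ i ∈ Finset.range (e+1), q ^ i % 2 = 1 := by
    intro i _
    have : Odd (q ^ i) := (Nat.odd_iff.mpr (by omega)).pow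
    exact Nat.odd_iff.mp this
  rw [Finset.sum_congr rfl h1]
  simp [Nat.mod_mod_of_dvd]

/-- If `N` is a friend of 10 and a Fermat prime `F_k = 2^(2^k) + 1` divides `N`, then
`N` has a prime factor congruent to 1 modulo `2·F_k`. -/
theorem friend_of_ten_fermat_prime (N k : ℕ) (hN : 10 < N)
    (hfriend : 5 * (ArithmeticFunction.sigma 1) N = 9 * N)
    (hFk : Nat.Prime (2 ^ 2 ^ k + 1)) (hdvd : (2 ^ 2 ^ k + 1) ∣ N) :
    ∃ p : ℕ, p.Prime ∧ p ∣ N ∧ p % (2 * (2 ^ 2 ^ k + 1)) = 1 := by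
  set F := 2 ^ 2 ^ k + 1 with hFdef
  haveI : Fact F.Prime := ⟨hFk⟩
  have hN0 : N ≠ 0 := by omega
  set s := ArithmeticFunction.sigma 1 N with hsdef
  have hs0 : s ≠ 0 := by
    intro h; rw [h] at hfriend; omega
  have hNodd : ¬ 2 ∣ N := friend10_odd N hN hfriend
  have hsodd : s % 2 = 1 := by
    have : ¬ 2 ∣ s := by
      intro h
      have : (2:ℕ) ∣ 9 * N := by rw [← hfriend]; exact Dvd.dvd.mul_left h 5
      exact hNodd ((Nat.Coprime.dvd_of_dvd_mul_left (by norm_num) this))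
    omega
  -- factorization product
  have hfact : s = N.factorization.prod fun p e => ArithmeticFunction.sigma 1 (p ^ e) :=
    ArithmeticFunction.isMultiplicative_sigma.multiplicative_factorization _ hN0
  -- every exponent is even
  have heven : ∀ q ∈ N.factorization.support, Even (N.factorization q) := by
    intro q hq
    have hqmem : q ∈ N.primeFactors := by rwa [Nat.support_factorization] at hq
    have hqp : q.Prime := Nat.prime_of_mem_primeFactors hqmem
    have hqN : q ∣ N := Nat.dvd_of_mem_primeFactors hqmem
    have hqodd : ¬ 2 ∣ q := fun h => hNodd (dvd_trans h hqN)
    have hdvds : ArithmeticFunction.sigma 1 (q ^ N.factorization q) ∣ s := by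
      rw [hfact, Finsupp.prod]
      exact Finset.dvd_prod_of_mem _ hq
    have hodds : (ArithmeticFunction.sigma 1 (q ^ N.factorization q)) % 2 = 1 := by
      have h2 : ¬ 2 ∣ ArithmeticFunction.sigma 1 (q ^ N.factorization q) := by
        intro h
        have := h.trans hdvds
        omega
      omega
    have := sigma_prime_pow_mod_two q (N.factorization q) hqp hqodd
    rw [hodds] at this
    exact Nat.even_iff.mpr (by omega)
  -- F has exponent ≥ 2
  have hFmem : F ∈ N.factorization.support := by
    rw [Nat.support_factorization]
    exact Nat.mem_primeFactors.mpr ⟨hFk, hdvd, hN0⟩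
  have ha2 : 2 ≤ N.factorization F := by
    have h1 : 1 ≤ N.factorization F := hFk.factorization_pos_of_dvd hN0 hdvd
    rcases heven F hFmem with ⟨m, hm⟩; omega
  -- F divides s
  have hFs : F ∣ s := by
    by_contra h
    have hF2N : F ^ 2 ∣ 5 * s := by
      rw [hfriend]
      have : F ^ 2 ∣ F ^ N.factorization F := pow_dvd_pow F ha2
      exact Dvd.dvd.mul_left (this.trans (Nat.ordProj_dvd N F)) 9
    have h2le : 2 ≤ (5 * s).factorization F :=
      (Nat.Prime.pow_dvd_iff_le_factorization hFk (by positivity)).mp hF2N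
    rw [Nat.factorization_mul (by norm_num) hs0] at h2le
    have h5f : (5:ℕ).factorization F ≤ 1 := by
      rw [Nat.Prime.factorization (by norm_num)]
      rw [Finsupp.single_apply]
      split <;> omega
    have hsf : s.factorization F = 0 := Nat.factorization_eq_zero_of_not_dvd h
    simp only [Finsupp.coe_add, Pi.add_apply] at h2le
    omega
  -- extract the prime q with F ∣ σ(q^e)
  have hdvdprod : F ∣ N.factorization.prod fun p e => ArithmeticFunction.sigma 1 (p ^ e) := by
    rwa [← hfact]
  rw [Finsupp.prod] at hdvdprod
  obtain ⟨q, hqmem, hFq⟩ := (Prime.dvd_finset_prod_iff hFk.prime _).mp hdvdprod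
  have hqmem' : q ∈ N.primeFactors := by rwa [Nat.support_factorization] at hqmem
  have hqp : q.Prime := Nat.prime_of_mem_primeFactors hqmem'
  have hqN : q ∣ N := Nat.dvd_of_mem_primeFactors hqmem'
  have hqodd : ¬ 2 ∣ q := fun h => hNodd (dvd_trans h hqN)
  -- q ≠ F
  have hqneF : q ≠ F := by
    intro h
    subst h
    -- F ∣ σ(F^e), but σ(F^e) ≡ 1 mod F
    have h0 : ((ArithmeticFunction.sigma 1 (F ^ N.factorization F) : ℕ) : ZMod F) = 0 :=
      (ZMod.natCast_eq_zero_iff _ _).mpr hFq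
    rw [ArithmeticFunction.sigma_one_apply_prime_pow hFk, Nat.cast_sum] at h0
    simp only [Nat.cast_pow] at h0
    rw [show ((F:ℕ) : ZMod F) = 0 from ZMod.natCast_self F] at h0
    rw [Finset.sum_eq_single 0 (by intro b _ hb; simp [zero_pow_eq, hb])
      (by intro h; exact absurd (Finset.mem_range.mpr (by omega)) h)] at h0
    simp at h0
  -- F ∤ q
  have hFndvdq : ¬ F ∣ q := by
    intro h
    exact hqneF ((Nat.prime_dvd_prime_iff_eq hFk hqp).mp h).symm
  set e := N.factorization q with hedef
  have heeven : Even e := heven q hqmem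
  have hx0 : (q : ZMod F) ≠ 0 := fun h => hFndvdq ((ZMod.natCast_eq_zero_iff _ _).mp h)
  -- (q : ZMod F) ^ (e+1) = 1
  have hgeo : ((q : ZMod F)) ^ (e + 1) = 1 := by
    have h0 : ((ArithmeticFunction.sigma 1 (q ^ e) : ℕ) : ZMod F) = 0 :=
      (ZMod.natCast_eq_zero_iff _ _).mpr hFq
    rw [ArithmeticFunction.sigma_one_apply_prime_pow hqp] at h0
    push_cast at h0
    have := geom_sum_mul (q : ZMod F) (e + 1)
    rw [h0, zero_mul] at this
    have h1 : ((q : ZMod F)) ^ (e + 1) - 1 = 0 := this.symm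
    have := sub_eq_zero.mp h1
    exact this
  have hflt : ((q : ZMod F)) ^ (2 ^ 2 ^ k) = 1 := by
    have := ZMod.pow_card_sub_one_eq_one hx0
    have hF1 : F - 1 = 2 ^ 2 ^ k := by rw [hFdef, Nat.add_sub_cancel]
    rwa [hF1] at this
  -- order divides gcd of odd number and power of two
  have hord1 : orderOf ((q : ZMod F)) = 1 := by
    have h1 : orderOf ((q : ZMod F)) ∣ e + 1 := orderOf_dvd_of_pow_eq_one hgeo
    have h2 : orderOf ((q : ZMod F)) ∣ 2 ^ 2 ^ k := orderOf_dvd_of_pow_eq_one hflt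
    have hcop : Nat.Coprime (e + 1) (2 ^ 2 ^ k) := by
      apply Nat.Coprime.pow_right
      rw [Nat.coprime_two_right]
      rcases heeven with ⟨m, hm⟩
      exact Nat.odd_iff.mpr (by omega)
    have := Nat.dvd_gcd h1 h2
    rw [Nat.Coprime] at hcop
    rw [Nat.gcd_comm] at hcop
    rw [Nat.gcd_comm] at this
    rw [hcop] at this
    exact Nat.dvd_one.mp this
  have hq1 : (q : ZMod F) = 1 := orderOf_eq_one_iff.mp hord1
  have hmodF : q % F = 1 % F := by
    have : ((q : ℕ) : ZMod F) = ((1 : ℕ) : ZMod F) := by rw [hq1]; simp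
    exact (ZMod.natCast_eq_natCast_iff _ _ _).mp this
  have hmod2 : q % 2 = 1 % 2 := by omega
  have hcop2F : Nat.Coprime 2 F := by
    rw [Nat.coprime_two_left]
    have : 1 ≤ 2 ^ 2 ^ k := Nat.one_le_two_pow
    have h2 : 2 ∣ 2 ^ 2 ^ k := dvd_pow_self 2 (by positivity)
    exact Nat.odd_iff.mpr (by omega)
  have hmod2F : q % (2 * F) = 1 % (2 * F) :=
    (Nat.modEq_and_modEq_iff_modEq_mul hcop2F).mp ⟨hmod2, hmodF⟩
  refine ⟨q, hqp, hqN, ?_⟩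
  have hF3 : 3 ≤ F := hFk.two_le.lt_of_ne (by
    intro h
    have he1 : 2 ^ 2 ^ k + 1 = 2 := h.symm
    have he2 : 2 ^ 1 ≤ 2 ^ 2 ^ k := Nat.pow_le_pow_right (by norm_num) Nat.one_le_two_pow
    simp at he2
    omega)
  rw [hmod2F]
  exact Nat.one_mod_eq_one.mpr (by omega)
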